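/- arXiv:2509.22417 — 2 statements merged into one kernel-verified Lean document; each statement's English description precedes it below -/
import Mathlib

section
/- Let P : ℤ → SL(2,ℝ) satisfy sup_{i∈ℤ} ‖P(i)‖ < ∞ and admit a dominated splitting. Then there exist c > 0 and ξ > 1 such that ‖P_n(i)‖ ≥ c ξ^n for every n ∈ ℕ and every i ∈ ℤ. -/
open Matrix

noncomputable section

/-- Euclidean plane. -/
abbrev E2 := EuclideanSpace ℝ (Fin 2)

/-- The real projective line, as the projectivization of `ℝ²`. -/
abbrev RP1 := Projectivization ℝ E2

/-- The linear map on `E2` induced by a `2×2` matrix. -/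
def matLin (A : Matrix (Fin 2) (Fin 2) ℝ) : E2 →ₗ[ℝ] E2 :=
  (WithLp.linearEquiv 2 ℝ (Fin 2 → ℝ)).symm.toLinearMap ∘ₗ
    A.mulVecLin ∘ₗ (WithLp.linearEquiv 2 ℝ (Fin 2 → ℝ)).toLinearMap

/-- Matrix-vector multiplication on `E2`. -/
def mulVecE (A : Matrix (Fin 2) (Fin 2) ℝ) (v : E2) : E2 := matLin A v

/-- The action of an (invertible) matrix on the projective line `RP1`
(junk value if the matrix is not injective). -/
def matAct (A : Matrix (Fin 2) (Fin 2) ℝ) (x : RP1) : RP1 :=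
  open scoped Classical in
  if h : Function.Injective (matLin A) then Projectivization.map (matLin A) h x else x

/-- The (Euclidean) operator norm of a `2×2` matrix. -/
def matOpNorm (A : Matrix (Fin 2) (Fin 2) ℝ) : ℝ :=
  ‖LinearMap.toContinuousLinearMap (matLin A)‖

/-- The metric `d([u],[w]) = √(1 − (⟨u,w⟩/(‖u‖‖w‖))²)` on `RP1`. -/
def projDist (x y : RP1) : ℝ :=
  Real.sqrt (1 - ((inner ℝ x.rep y.rep : ℝ) / (‖x.rep‖ * ‖y.rep‖)) ^ 2)

/-- Forward cocycle iterates: `fwd A n i = A(i+n−1)⋯A(i)`. -/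
def fwd (A : ℤ → Matrix (Fin 2) (Fin 2) ℝ) : ℕ → ℤ → Matrix (Fin 2) (Fin 2) ℝ
  | 0, _ => 1
  | n + 1, i => A (i + n) * fwd A n i

/-- Backward cocycle iterates: `bwd A n i = A(i−n)⁻¹⋯A(i−1)⁻¹`. -/
def bwd (A : ℤ → Matrix (Fin 2) (Fin 2) ℝ) : ℕ → ℤ → Matrix (Fin 2) (Fin 2) ℝ
  | 0, _ => 1
  | n + 1, i => bwd A n (i - 1) * (A (i - 1))⁻¹

/-- `w` is a nonzero vector spanning the line `x ∈ RP1`. -/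
def SpansLine (w : E2) (x : RP1) : Prop := ∃ h : w ≠ 0, Projectivization.mk ℝ w h = x

/-- Uniform hyperbolicity witnessed by unstable/stable directions `u`, `s`. -/
def IsUHWith (P : ℤ → Matrix (Fin 2) (Fin 2) ℝ) (u s : ℤ → RP1) : Prop :=
  (∀ i : ℤ, matAct (P i) (u i) = u (i + 1) ∧ matAct (P i) (s i) = s (i + 1)) ∧
  ∃ C > 0, ∃ η > 1, ∀ i : ℤ, ∀ n : ℕ,
    (∀ w : E2, ‖w‖ = 1 → SpansLine w (u i) → ‖mulVecE (bwd P n i) w‖ ≤ C / η ^ n) ∧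
    (∀ w : E2, ‖w‖ = 1 → SpansLine w (s i) → ‖mulVecE (fwd P n i) w‖ ≤ C / η ^ n)

/-- Uniform hyperbolicity of a cocycle. -/
def IsUH (P : ℤ → Matrix (Fin 2) (Fin 2) ℝ) : Prop := ∃ u s, IsUHWith P u s

/-- Dominated splitting (DS1)–(DS4). -/
def IsDS (T : ℤ → Matrix (Fin 2) (Fin 2) ℝ) : Prop :=
  ∃ u s : ℤ → RP1,
    (∀ i : ℤ, matAct (T i) (u i) = u (i + 1) ∧ matAct (T i) (s i) = s (i + 1)) ∧
    ∃ N : ℕ, 1 ≤ N ∧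
      (∃ η > 1, ∀ i : ℤ, ∀ w w' : E2, ‖w‖ = 1 → ‖w'‖ = 1 →
        SpansLine w (u i) → SpansLine w' (s i) →
        ‖mulVecE (fwd T N i) w‖ > η * ‖mulVecE (fwd T N i) w'‖) ∧
      (∃ δ > 0, ∀ i : ℤ, projDist (u i) (s i) > δ) ∧
      (∃ c > 0, ∀ i : ℤ, c ≤ matOpNorm (fwd T N i))

/-! ### Auxiliary lemmas -/

lemma mulVecE_apply (A : Matrix (Fin 2) (Fin 2) ℝ) (v : E2) (j : Fin 2) :
    mulVecE A v j = A j 0 * v 0 + A j 1 * v 1 := by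
  simp [mulVecE, matLin, Matrix.mulVec, dotProduct, Fin.sum_univ_two, WithLp.linearEquiv]
  fin_cases j <;> simp

lemma inner_E2 (v w : E2) : (inner ℝ v w : ℝ) = v 0 * w 0 + v 1 * w 1 := by
  simp [EuclideanSpace.inner_eq_star_dotProduct, dotProduct, Fin.sum_univ_two]
  ring

lemma norm_sq_E2 (v : E2) : ‖v‖ ^ 2 = v 0 ^ 2 + v 1 ^ 2 := by
  rw [EuclideanSpace.norm_eq, Real.sq_sqrt (by positivity)]
  simp [Fin.sum_univ_two, sq_abs]

lemma matLin_one : matLin 1 = LinearMap.id := by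
  ext v
  simp [matLin, Matrix.mulVecLin_one]

lemma matLin_mul (A B : Matrix (Fin 2) (Fin 2) ℝ) :
    matLin (A * B) = (matLin A).comp (matLin B) := by
  ext v
  simp [matLin, Matrix.mulVecLin_mul]

lemma mulVecE_one (v : E2) : mulVecE 1 v = v := by
  rw [mulVecE, matLin_one]; rfl

lemma mulVecE_mul (A B : Matrix (Fin 2) (Fin 2) ℝ) (v : E2) :
    mulVecE (A * B) v = mulVecE A (mulVecE B v) := by
  rw [mulVecE, matLin_mul]; rfl

lemma mulVecE_smul (A : Matrix (Fin 2) (Fin 2) ℝ) (c : ℝ) (v : E2) :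
    mulVecE A (c • v) = c • mulVecE A v := map_smul (matLin A) c v

lemma matLin_injective (A : Matrix (Fin 2) (Fin 2) ℝ) (h : IsUnit A.det) :
    Function.Injective (matLin A) := by
  have key : ∀ v, matLin A⁻¹ (matLin A v) = v := by
    intro v
    have h2 : matLin (A⁻¹ * A) v = matLin 1 v := by rw [Matrix.nonsing_inv_mul A h]
    rw [matLin_mul] at h2
    simpa [matLin_one] using h2
  exact Function.LeftInverse.injective key

lemma norm_mulVecE_le (A : Matrix (Fin 2) (Fin 2) ℝ) (v : E2) :
    ‖mulVecE A v‖ ≤ matOpNorm A * ‖v‖ := by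
  have := (LinearMap.toContinuousLinearMap (matLin A)).le_opNorm v
  simpa [mulVecE, matOpNorm] using this

lemma matOpNorm_nonneg (A : Matrix (Fin 2) (Fin 2) ℝ) : 0 ≤ matOpNorm A :=
  norm_nonneg _

lemma norm_mulVecE_le_matOpNorm (A : Matrix (Fin 2) (Fin 2) ℝ) {w : E2} (hw : ‖w‖ = 1) :
    ‖mulVecE A w‖ ≤ matOpNorm A := by
  have := norm_mulVecE_le A w
  rwa [hw, mul_one] at this

lemma matOpNorm_le_bound (A : Matrix (Fin 2) (Fin 2) ℝ) {c : ℝ} (hc : 0 ≤ c)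
    (h : ∀ v : E2, ‖mulVecE A v‖ ≤ c * ‖v‖) : matOpNorm A ≤ c := by
  apply ContinuousLinearMap.opNorm_le_bound _ hc
  intro v
  simpa [mulVecE] using h v

lemma matOpNorm_mul_le (A B : Matrix (Fin 2) (Fin 2) ℝ) :
    matOpNorm (A * B) ≤ matOpNorm A * matOpNorm B := by
  apply matOpNorm_le_bound _ (mul_nonneg (matOpNorm_nonneg A) (matOpNorm_nonneg B))
  intro v
  rw [mulVecE_mul, mul_assoc]
  exact (norm_mulVecE_le A _).trans
    (mul_le_mul_of_nonneg_left (norm_mulVecE_le B v) (matOpNorm_nonneg A))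

/-! ### cross product -/

def crossE (v w : E2) : ℝ := v 0 * w 1 - v 1 * w 0

lemma cross_sq_add_inner_sq (v w : E2) :
    crossE v w ^ 2 + (inner ℝ v w : ℝ) ^ 2 = ‖v‖ ^ 2 * ‖w‖ ^ 2 := by
  rw [norm_sq_E2, norm_sq_E2, inner_E2, crossE]; ring

lemma abs_cross_le (v w : E2) : |crossE v w| ≤ ‖v‖ * ‖w‖ := by
  have h := cross_sq_add_inner_sq v w
  have h2 : crossE v w ^ 2 ≤ (‖v‖ * ‖w‖) ^ 2 := by nlinarith [sq_nonneg (inner ℝ v w : ℝ)]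
  calc |crossE v w| = Real.sqrt (crossE v w ^ 2) := (Real.sqrt_sq_eq_abs _).symm
    _ ≤ Real.sqrt ((‖v‖ * ‖w‖) ^ 2) := Real.sqrt_le_sqrt h2
    _ = ‖v‖ * ‖w‖ := Real.sqrt_sq (by positivity)

lemma cross_mulVecE (A : Matrix (Fin 2) (Fin 2) ℝ) (v w : E2) :
    crossE (mulVecE A v) (mulVecE A w) = A.det * crossE v w := by
  simp only [crossE, mulVecE_apply, Matrix.det_fin_two]
  ring

lemma prod_norm_ge (A : Matrix (Fin 2) (Fin 2) ℝ) (hdet : A.det = 1) (v w : E2) :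
    |crossE v w| ≤ ‖mulVecE A v‖ * ‖mulVecE A w‖ := by
  calc |crossE v w| = |crossE (mulVecE A v) (mulVecE A w)| := by
        rw [cross_mulVecE, hdet, one_mul]
    _ ≤ _ := abs_cross_le _ _

/-! ### SpansLine and projective lemmas -/

lemma spansLine_mulVecE (A : Matrix (Fin 2) (Fin 2) ℝ) (h : IsUnit A.det) (w : E2) (x : RP1)
    (hs : SpansLine w x) : SpansLine (mulVecE A w) (matAct A x) := by
  obtain ⟨hw, rfl⟩ := hs
  have hinj := matLin_injective A h
  have hne : mulVecE A w ≠ 0 := by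
    intro h0
    exact hw (hinj (by simpa [mulVecE] using h0))
  refine ⟨hne, ?_⟩
  rw [matAct, dif_pos hinj, Projectivization.map_mk]
  rfl

lemma unit_spans_of_spans {w : E2} {x : RP1} (h : SpansLine w x) :
    ‖(‖w‖⁻¹ • w)‖ = 1 ∧ SpansLine (‖w‖⁻¹ • w) x := by
  obtain ⟨hw, heq⟩ := h
  have hn : ‖w‖ ≠ 0 := norm_ne_zero_iff.mpr hw
  constructor
  · rw [norm_smul, norm_inv, norm_norm, inv_mul_cancel₀ hn]
  · refine ⟨smul_ne_zero (inv_ne_zero hn) hw, ?_⟩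
    rw [← heq, Projectivization.mk_eq_mk_iff]
    exact ⟨Units.mk0 _ (inv_ne_zero hn), by simp [Units.smul_def]⟩

lemma exists_unit_spans (x : RP1) : ∃ w : E2, ‖w‖ = 1 ∧ SpansLine w x := by
  have h : SpansLine x.rep x := ⟨x.rep_nonzero, Projectivization.mk_rep x⟩
  obtain ⟨h1, h2⟩ := unit_spans_of_spans h
  exact ⟨_, h1, h2⟩

lemma projDist_eq_abs_cross (x y : RP1) (w w' : E2) (hw1 : ‖w‖ = 1) (hw1' : ‖w'‖ = 1)
    (hx : SpansLine w x) (hy : SpansLine w' y) : projDist x y = |crossE w w'| := by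
  obtain ⟨hwne, hxe⟩ := hx
  obtain ⟨hw'ne, hye⟩ := hy
  obtain ⟨a, ha⟩ := (Projectivization.mk_eq_mk_iff ℝ x.rep w x.rep_nonzero hwne).mp
    (by rw [hxe]; exact Projectivization.mk_rep x)
  obtain ⟨b, hb⟩ := (Projectivization.mk_eq_mk_iff ℝ y.rep w' y.rep_nonzero hw'ne).mp
    (by rw [hye]; exact Projectivization.mk_rep y)
  have ha' : x.rep = (a : ℝ) • w := by rw [← ha, Units.smul_def]
  have hb' : y.rep = (b : ℝ) • w' := by rw [← hb, Units.smul_def]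
  have ha0 : (a : ℝ) ≠ 0 := a.ne_zero
  have hb0 : (b : ℝ) ≠ 0 := b.ne_zero
  have hinner : (inner ℝ x.rep y.rep : ℝ) = (a : ℝ) * (b : ℝ) * (inner ℝ w w' : ℝ) := by
    rw [ha', hb', real_inner_smul_left, real_inner_smul_right]; ring
  have hnx : ‖x.rep‖ = |(a : ℝ)| := by rw [ha', norm_smul, hw1, Real.norm_eq_abs, mul_one]
  have hny : ‖y.rep‖ = |(b : ℝ)| := by rw [hb', norm_smul, hw1', Real.norm_eq_abs, mul_one]
  have hratio : ((inner ℝ x.rep y.rep : ℝ) / (‖x.rep‖ * ‖y.rep‖)) ^ 2 = (inner ℝ w w' : ℝ) ^ 2 := by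
    rw [hinner, hnx, hny, div_pow, mul_pow ((a:ℝ)*(b:ℝ))]
    have h2 : (|(a:ℝ)| * |(b:ℝ)|) ^ 2 = ((a:ℝ)*(b:ℝ))^2 := by
      rw [mul_pow, mul_pow, sq_abs, sq_abs]
    rw [h2, mul_comm, mul_div_assoc, div_self (pow_ne_zero _ (mul_ne_zero ha0 hb0)), mul_one]
  have hcs : crossE w w' ^ 2 + (inner ℝ w w' : ℝ) ^ 2 = 1 := by
    have h := cross_sq_add_inner_sq w w'
    rw [hw1, hw1'] at h
    simpa using h
  rw [projDist, hratio, show 1 - (inner ℝ w w' : ℝ) ^ 2 = crossE w w' ^ 2 by linarith]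
  exact Real.sqrt_sq_eq_abs _

/-! ### cocycle lemmas -/

lemma fwd_add (A : ℤ → Matrix (Fin 2) (Fin 2) ℝ) :
    ∀ (m n : ℕ) (i : ℤ), fwd A (m + n) i = fwd A m (i + n) * fwd A n i := by
  intro m
  induction m with
  | zero => intro n i; simp [fwd]
  | succ m ih =>
      intro n i
      have h1 : m + 1 + n = (m + n) + 1 := by omega
      rw [h1]
      show A (i + ↑(m + n)) * fwd A (m + n) i = (A ((i + n) + ↑m) * fwd A m (i + n)) * fwd A n i
      rw [ih n i, mul_assoc]
      congr 2
      push_cast; ring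

lemma det_fwd (T : ℤ → Matrix (Fin 2) (Fin 2) ℝ) (h : ∀ j, (T j).det = 1) :
    ∀ (n : ℕ) (i : ℤ), (fwd T n i).det = 1 := by
  intro n
  induction n with
  | zero => intro i; simp [fwd]
  | succ n ih => intro i; rw [show fwd T (n+1) i = T (i + n) * fwd T n i from rfl,
      Matrix.det_mul, h, ih, one_mul]

lemma matOpNorm_fwd_le (T : ℤ → Matrix (Fin 2) (Fin 2) ℝ) (M : ℝ) (h1 : 1 ≤ M)
    (hM : ∀ j, matOpNorm (T j) ≤ M) : ∀ (n : ℕ) (i : ℤ), matOpNorm (fwd T n i) ≤ M ^ n := by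
  intro n
  induction n with
  | zero =>
      intro i
      rw [pow_zero]
      apply matOpNorm_le_bound _ zero_le_one
      intro v
      rw [show fwd T 0 i = 1 from rfl, mulVecE_one, one_mul]
  | succ n ih =>
      intro i
      rw [show fwd T (n+1) i = T (i + n) * fwd T n i from rfl, pow_succ, mul_comm (M ^ n) M]
      exact (matOpNorm_mul_le _ _).trans
        (mul_le_mul (hM _) (ih i) (matOpNorm_nonneg _) (le_trans zero_le_one h1))

lemma spans_fwd (T : ℤ → Matrix (Fin 2) (Fin 2) ℝ) (hdet : ∀ j, (T j).det = 1)
    (u : ℤ → RP1) (hinv : ∀ j, matAct (T j) (u j) = u (j + 1)) (i : ℤ) (w : E2)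
    (hw : SpansLine w (u i)) : ∀ m : ℕ, SpansLine (mulVecE (fwd T m i) w) (u (i + m)) := by
  intro m
  induction m with
  | zero => simpa [fwd, mulVecE_one] using hw
  | succ m ih =>
      rw [show fwd T (m+1) i = T (i + m) * fwd T m i from rfl, mulVecE_mul]
      have h := spansLine_mulVecE (T (i + m)) (by rw [hdet]; exact isUnit_one) _ _ ih
      rw [hinv (i + m)] at h
      have he : i + (m : ℤ) + 1 = i + (m + 1 : ℕ) := by push_cast; ring
      rwa [he] at h

lemma norm_mulVecE_normalize (A : Matrix (Fin 2) (Fin 2) ℝ) (v : E2) (hv : v ≠ 0) :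
    ‖mulVecE A v‖ = ‖v‖ * ‖mulVecE A (‖v‖⁻¹ • v)‖ := by
  have hn : ‖v‖ ≠ 0 := norm_ne_zero_iff.mpr hv
  rw [mulVecE_smul, norm_smul, norm_inv, norm_norm]
  field_simp

theorem stmt_2 (P : ℤ → Matrix.SpecialLinearGroup (Fin 2) ℝ)
    (hbdd : ∃ C : ℝ, ∀ i : ℤ, matOpNorm (P i : Matrix (Fin 2) (Fin 2) ℝ) ≤ C)
    (hDS : IsDS (fun i => (P i : Matrix (Fin 2) (Fin 2) ℝ))) :
    ∃ c > 0, ∃ ξ > 1, ∀ (n : ℕ) (i : ℤ),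
      c * ξ ^ n ≤ matOpNorm (fwd (fun j => (P j : Matrix (Fin 2) (Fin 2) ℝ)) n i) := by
  obtain ⟨C, hC⟩ := hbdd
  set T : ℤ → Matrix (Fin 2) (Fin 2) ℝ := fun j => (P j : Matrix (Fin 2) (Fin 2) ℝ) with hT
  have hdet : ∀ j, (T j).det = 1 := fun j => (P j).2
  obtain ⟨u, s, hinv, N, hN, ⟨η, hη, hdom⟩, ⟨δ, hδ, hsep⟩, -⟩ := hDS
  set M : ℝ := max C 1 with hM
  have hM1 : (1 : ℝ) ≤ M := le_max_right _ _
  have hM0 : (0 : ℝ) < M := lt_of_lt_of_le one_pos hM1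
  have hMb : ∀ j, matOpNorm (T j) ≤ M := fun j => (hC j).trans (le_max_left _ _)
  have hfwdM : ∀ (n : ℕ) (i : ℤ), matOpNorm (fwd T n i) ≤ M ^ n := matOpNorm_fwd_le T M hM1 hMb
  have hdetf : ∀ (n : ℕ) (i : ℤ), (fwd T n i).det = 1 := det_fwd T hdet
  have hη0 : (0 : ℝ) < η := lt_trans one_pos hη
  have hsη : 1 < Real.sqrt η := by
    rw [show (1 : ℝ) = Real.sqrt 1 by simp]
    exact Real.sqrt_lt_sqrt zero_le_one hη
  have hsη0 : (0 : ℝ) < Real.sqrt η := lt_trans one_pos hsη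
  -- Key lemma: growth along blocks of length N
  have key : ∀ (k : ℕ) (i : ℤ),
      Real.sqrt δ * Real.sqrt η ^ k ≤ matOpNorm (fwd T (k * N) i) := by
    intro k i
    obtain ⟨wu, hwu1, hwu⟩ := exists_unit_spans (u i)
    obtain ⟨ws, hws1, hws⟩ := exists_unit_spans (s i)
    have hcross : δ < |crossE wu ws| := by
      have h := hsep i
      rwa [projDist_eq_abs_cross (u i) (s i) wu ws hwu1 hws1 hwu hws] at h
    -- the induction claim
    have claim : ∀ m : ℕ,
        η ^ m * ‖mulVecE (fwd T (m * N) i) ws‖ ≤ ‖mulVecE (fwd T (m * N) i) wu‖ := by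
      intro m
      induction m with
      | zero => simp [fwd, mulVecE_one, hwu1, hws1]
      | succ m ih =>
          set j : ℤ := i + (m * N : ℕ) with hj
          set v : E2 := mulVecE (fwd T (m * N) i) wu with hv
          set z : E2 := mulVecE (fwd T (m * N) i) ws with hz
          have hvs : SpansLine v (u j) := spans_fwd T hdet u (fun l => (hinv l).1) i wu hwu (m * N)
          have hzs : SpansLine z (s j) := spans_fwd T hdet s (fun l => (hinv l).2) i ws hws (m * N)
          have hvne : v ≠ 0 := hvs.1
          have hzne : z ≠ 0 := hzs.1
          obtain ⟨hvu1, hvu⟩ := unit_spans_of_spans hvs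
          obtain ⟨hzu1, hzu⟩ := unit_spans_of_spans hzs
          have hdd := hdom j _ _ hvu1 hzu1 hvu hzu
          have hsplit : fwd T ((m + 1) * N) i = fwd T N j * fwd T (m * N) i := by
            rw [show (m + 1) * N = N + m * N by ring, fwd_add]
          have hV : ‖mulVecE (fwd T ((m+1) * N) i) wu‖
              = ‖v‖ * ‖mulVecE (fwd T N j) (‖v‖⁻¹ • v)‖ := by
            rw [hsplit, mulVecE_mul, ← hv, norm_mulVecE_normalize _ _ hvne]
          have hZ : ‖mulVecE (fwd T ((m+1) * N) i) ws‖
              = ‖z‖ * ‖mulVecE (fwd T N j) (‖z‖⁻¹ • z)‖ := by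
            rw [hsplit, mulVecE_mul, ← hz, norm_mulVecE_normalize _ _ hzne]
          rw [hV, hZ]
          have hb0 : (0 : ℝ) ≤ ‖mulVecE (fwd T N j) (‖z‖⁻¹ • z)‖ := norm_nonneg _
          calc η ^ (m+1) * (‖z‖ * ‖mulVecE (fwd T N j) (‖z‖⁻¹ • z)‖)
              = (η ^ m * ‖z‖) * (η * ‖mulVecE (fwd T N j) (‖z‖⁻¹ • z)‖) := by ring
            _ ≤ ‖v‖ * (η * ‖mulVecE (fwd T N j) (‖z‖⁻¹ • z)‖) :=
                mul_le_mul_of_nonneg_right ih (by positivity)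
            _ ≤ ‖v‖ * ‖mulVecE (fwd T N j) (‖v‖⁻¹ • v)‖ :=
                mul_le_mul_of_nonneg_left (le_of_lt hdd) (norm_nonneg v)
    -- combine with the determinant bound
    set vk : E2 := mulVecE (fwd T (k * N) i) wu with hvk
    set zk : E2 := mulVecE (fwd T (k * N) i) ws with hzk
    have hprod : δ ≤ ‖vk‖ * ‖zk‖ :=
      le_of_lt (lt_of_lt_of_le hcross (prod_norm_ge _ (hdetf (k * N) i) wu ws))
    have hηk : (0 : ℝ) < η ^ k := pow_pos hη0 k
    have hsq : δ * η ^ k ≤ ‖vk‖ ^ 2 := by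
      nlinarith [claim k, norm_nonneg vk, norm_nonneg zk,
        mul_le_mul_of_nonneg_left hprod (le_of_lt hηk),
        mul_le_mul_of_nonneg_left (claim k) (norm_nonneg vk)]
    have h4 : Real.sqrt δ * Real.sqrt η ^ k ≤ ‖vk‖ := by
      have h5 : Real.sqrt δ * Real.sqrt η ^ k = Real.sqrt (δ * η ^ k) := by
        rw [Real.sqrt_mul hδ.le]
        congr 1
        rw [show η ^ k = (Real.sqrt η ^ 2) ^ k by rw [Real.sq_sqrt hη0.le], ← pow_mul,
          mul_comm 2 k, pow_mul, Real.sqrt_sq (by positivity)]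
      rw [h5, ← Real.sqrt_sq (norm_nonneg vk)]
      exact Real.sqrt_le_sqrt hsq
    exact h4.trans (norm_mulVecE_le_matOpNorm _ hwu1)
  -- assemble
  have hNR : (0 : ℝ) < (N : ℝ) := by exact_mod_cast hN
  refine ⟨Real.sqrt δ / M ^ N, by positivity, Real.sqrt η ^ ((N : ℝ)⁻¹), ?_, ?_⟩
  · exact (Real.one_lt_rpow_iff_of_pos hsη0).mpr (Or.inl ⟨hsη, by positivity⟩)
  · intro n i
    set ξ : ℝ := Real.sqrt η ^ ((N : ℝ)⁻¹) with hξdef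
    have hξ1 : 1 ≤ ξ :=
      le_of_lt ((Real.one_lt_rpow_iff_of_pos hsη0).mpr (Or.inl ⟨hsη, by positivity⟩))
    set q : ℕ := n / N with hq
    have hmod : n = N * q + n % N := (Nat.div_add_mod n N).symm
    have hrlt : n % N < N := Nat.mod_lt n (by omega)
    have hqq : (q + 1) * N = N * q + N := by ring
    have hnle : n ≤ (q + 1) * N := by omega
    set m : ℕ := (q + 1) * N - n with hm
    have hmN : m ≤ N := by omega
    have hsplit : fwd T ((q + 1) * N) i = fwd T m (i + n) * fwd T n i := by
      rw [show (q + 1) * N = m + n by omega, fwd_add]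
    have h1 : Real.sqrt δ * Real.sqrt η ^ (q + 1) ≤ matOpNorm (fwd T ((q + 1) * N) i) :=
      key (q + 1) i
    have h2 : matOpNorm (fwd T ((q + 1) * N) i) ≤ M ^ N * matOpNorm (fwd T n i) := by
      rw [hsplit]
      refine (matOpNorm_mul_le _ _).trans (mul_le_mul_of_nonneg_right ?_ (matOpNorm_nonneg _))
      exact (hfwdM m (i + n)).trans (pow_le_pow_right₀ hM1 hmN)
    have h3 : Real.sqrt δ * Real.sqrt η ^ (q + 1) ≤ M ^ N * matOpNorm (fwd T n i) :=
      h1.trans h2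
    have hxpow : ξ ^ n ≤ Real.sqrt η ^ (q + 1) := by
      have hx1 : ξ ^ n ≤ ξ ^ ((q + 1) * N) := pow_le_pow_right₀ hξ1 hnle
      have hx2 : ξ ^ ((q + 1) * N) = Real.sqrt η ^ (q + 1) := by
        rw [hξdef, ← Real.rpow_natCast (Real.sqrt η ^ ((N : ℝ)⁻¹)) ((q + 1) * N),
          ← Real.rpow_natCast (Real.sqrt η) (q + 1), ← Real.rpow_mul hsη0.le]
        congr 1
        push_cast
        field_simp
      rw [hx2] at hx1
      exact hx1
    rw [div_mul_eq_mul_div, div_le_iff₀ (by positivity)]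
    calc Real.sqrt δ * ξ ^ n ≤ Real.sqrt δ * Real.sqrt η ^ (q + 1) :=
          mul_le_mul_of_nonneg_left hxpow (Real.sqrt_nonneg δ)
      _ ≤ M ^ N * matOpNorm (fwd T n i) := h3
      _ = matOpNorm (fwd T n i) * M ^ N := mul_comm _ _
end
end

section
/- Fix blocks B₁, …, B_D and λ ≥ 0, and let χ : ℤ → Fin D be any block sequence with concatenated resonator data (v_i, ℓ_i, s_i)_{i∈ℤ}. Let P^λ : ℤ → SL(2,ℝ), P^λ(i) = P^λ_{ℓ_i,s_i,v_i}, be the resonator propagation matrix cocycle, and let 𝒫^λ : ℤ → SL(2,ℝ), 𝒫^λ(j) = 𝒫^λ_{B_{χ(j)}}, be the block propagation matrix cocycle. Then 𝒫^λ is uniformly hyperbolic if and only if P^λ is uniformly hyperbolic. -/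
open Matrix

noncomputable section

/-- A block: a nonempty finite list of triples `(v, ℓ, s)` of positive reals. -/
def Block : Type :=
  {L : List (ℝ × ℝ × ℝ) // L ≠ [] ∧ ∀ t ∈ L, 0 < t.1 ∧ 0 < t.2.1 ∧ 0 < t.2.2}

/-- The single-resonator propagation matrix `P^λ_{ℓ,s,v}`. -/
def propMat (lam ℓ s v : ℝ) : Matrix (Fin 2) (Fin 2) ℝ :=
  !![1 - s * ℓ * lam / v ^ 2, s; -(ℓ * lam / v ^ 2), 1]

/-- Propagation matrix of a resonator triple `(v, ℓ, s)`. -/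
def propOf (lam : ℝ) (t : ℝ × ℝ × ℝ) : Matrix (Fin 2) (Fin 2) ℝ :=
  propMat lam t.2.1 t.2.2 t.1

/-- The block propagation matrix `𝒫^λ_B = P^λ_{ℓ_L,s_L,v_L} ⋯ P^λ_{ℓ₁,s₁,v₁}`. -/
def blockMat (lam : ℝ) (Bd : Block) : Matrix (Fin 2) (Fin 2) ℝ :=
  ((Bd.1.map (propOf lam)).reverse).prod

/-- `data` (with block-start indices `st`) is the bi-infinite concatenation of the
blocks `B (χ j)`. -/
def IsConcat {D : ℕ} (B : Fin D → Block) (χ : ℤ → Fin D)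
    (data : ℤ → ℝ × ℝ × ℝ) (st : ℤ → ℤ) : Prop :=
  st 0 = 0 ∧ (∀ j : ℤ, st (j + 1) = st j + ((B (χ j)).1.length : ℤ)) ∧
    ∀ (j : ℤ) (k : ℕ) (hk : k < (B (χ j)).1.length),
      data (st j + (k : ℤ)) = (B (χ j)).1.get ⟨k, hk⟩

namespace UHAux

open Projectivization

abbrev Mat2 := Matrix (Fin 2) (Fin 2) ℝ

lemma matLin_one : matLin 1 = LinearMap.id := by
  ext w : 1
  simp [matLin]

lemma matLin_mul (A B : Mat2) : matLin (A * B) = (matLin A).comp (matLin B) := by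
  ext w : 1
  simp [matLin, Matrix.mulVecLin_mul]

lemma mulVecE_mul (A B : Mat2) (w : E2) : mulVecE (A * B) w = mulVecE A (mulVecE B w) := by
  simp [mulVecE, matLin_mul]

lemma mulVecE_one (w : E2) : mulVecE 1 w = w := by simp [mulVecE, matLin_one]

lemma mulVecE_smul (A : Mat2) (c : ℝ) (w : E2) : mulVecE A (c • w) = c • mulVecE A w :=
  map_smul (matLin A) c w

lemma norm_mulVecE_le (A : Mat2) (w : E2) : ‖mulVecE A w‖ ≤ matOpNorm A * ‖w‖ :=
  (LinearMap.toContinuousLinearMap (matLin A)).le_opNorm w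

lemma matOpNorm_nonneg (A : Mat2) : 0 ≤ matOpNorm A := norm_nonneg _

lemma matOpNorm_mul_le (A B : Mat2) : matOpNorm (A * B) ≤ matOpNorm A * matOpNorm B := by
  have h : LinearMap.toContinuousLinearMap (matLin (A * B)) =
      (LinearMap.toContinuousLinearMap (matLin A)).comp
        (LinearMap.toContinuousLinearMap (matLin B)) := by
    ext w
    simp [matLin_mul]
  rw [matOpNorm, h]
  exact ContinuousLinearMap.opNorm_comp_le _ _

lemma matOpNorm_one : matOpNorm (1 : Mat2) ≤ 1 := by
  have h : LinearMap.toContinuousLinearMap (matLin 1) = ContinuousLinearMap.id ℝ E2 := by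
    ext w
    simp [matLin_one]
  rw [matOpNorm, h]
  simp

lemma injective_matLin {A : Mat2} (h : IsUnit A) : Function.Injective (matLin A) := by
  have h1 : A⁻¹ * A = 1 := Matrix.nonsing_inv_mul A ((Matrix.isUnit_iff_isUnit_det _).mp h)
  intro x y hxy
  have h2 := congrArg (matLin A⁻¹) hxy
  rw [← LinearMap.comp_apply, ← LinearMap.comp_apply, ← matLin_mul, h1, matLin_one] at h2
  simpa using h2

lemma isUnit_inv {A : Mat2} (h : IsUnit A) : IsUnit A⁻¹ := by
  have h1 : A⁻¹ * A = 1 := Matrix.nonsing_inv_mul A ((Matrix.isUnit_iff_isUnit_det _).mp h)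
  have h2 : A * A⁻¹ = 1 := Matrix.mul_nonsing_inv A ((Matrix.isUnit_iff_isUnit_det _).mp h)
  exact isUnit_iff_exists.2 ⟨A, h1, h2⟩

lemma mulVecE_ne_zero {A : Mat2} (h : IsUnit A) {w : E2} (hw : w ≠ 0) : mulVecE A w ≠ 0 := by
  intro hc
  apply hw
  apply injective_matLin h
  show matLin A w = matLin A 0
  rw [map_zero]
  exact hc

lemma matAct_mk {A : Mat2} (h : IsUnit A) {w : E2} (hw : w ≠ 0) (hw2 : mulVecE A w ≠ 0) :
    matAct A (Projectivization.mk ℝ w hw) = Projectivization.mk ℝ (mulVecE A w) hw2 := by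
  unfold matAct
  rw [dif_pos (injective_matLin h)]
  exact Projectivization.map_mk (matLin A) (injective_matLin h) w hw

lemma mk_congr {v w : E2} (hv : v ≠ 0) (hw : w ≠ 0) (h : v = w) :
    Projectivization.mk ℝ v hv = Projectivization.mk ℝ w hw := by subst h; rfl

lemma matAct_one (x : RP1) : matAct (1 : Mat2) x = x := by
  induction x using Projectivization.ind with
  | h w hw =>
    rw [matAct_mk isUnit_one hw (mulVecE_ne_zero isUnit_one hw)]
    exact mk_congr _ _ (mulVecE_one w)

lemma matAct_mul {A B : Mat2} (hA : IsUnit A) (hB : IsUnit B) (x : RP1) :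
    matAct (A * B) x = matAct A (matAct B x) := by
  induction x using Projectivization.ind with
  | h w hw =>
    rw [matAct_mk (hA.mul hB) hw (mulVecE_ne_zero (hA.mul hB) hw),
      matAct_mk hB hw (mulVecE_ne_zero hB hw),
      matAct_mk hA (mulVecE_ne_zero hB hw) (mulVecE_ne_zero hA (mulVecE_ne_zero hB hw))]
    exact mk_congr _ _ (mulVecE_mul A B w)

lemma matAct_inv {A : Mat2} {x y : RP1} (h : IsUnit A) (hxy : matAct A x = y) :
    matAct A⁻¹ y = x := by
  have h1 : A⁻¹ * A = 1 := Matrix.nonsing_inv_mul A ((Matrix.isUnit_iff_isUnit_det _).mp h)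
  rw [← hxy, ← matAct_mul (isUnit_inv h) h, h1, matAct_one]

lemma spansLine_ne_zero {w : E2} {x : RP1} (h : SpansLine w x) : w ≠ 0 := by
  obtain ⟨hw, -⟩ := h; exact hw

lemma spansLine_matAct {A : Mat2} (hA : IsUnit A) {w : E2} {x : RP1} (h : SpansLine w x) :
    SpansLine (mulVecE A w) (matAct A x) := by
  obtain ⟨hw, rfl⟩ := h
  exact ⟨mulVecE_ne_zero hA hw, (matAct_mk hA hw (mulVecE_ne_zero hA hw)).symm⟩

lemma spansLine_smul {w : E2} {x : RP1} (c : ℝ) (hc : c ≠ 0) (h : SpansLine w x) :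
    SpansLine (c • w) x := by
  obtain ⟨hw, rfl⟩ := h
  refine ⟨smul_ne_zero hc hw, ?_⟩
  exact (Projectivization.mk_eq_mk_iff' ℝ _ _ _ hw).2 ⟨c, rfl⟩

lemma bound_scale {M : Mat2} {x : RP1} {c : ℝ}
    (h : ∀ w : E2, ‖w‖ = 1 → SpansLine w x → ‖mulVecE M w‖ ≤ c) :
    ∀ w : E2, SpansLine w x → ‖mulVecE M w‖ ≤ c * ‖w‖ := by
  intro w hw
  have hw0 : w ≠ 0 := spansLine_ne_zero hw
  have hn : ‖w‖ ≠ 0 := norm_ne_zero_iff.2 hw0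
  set u : E2 := ‖w‖⁻¹ • w with hu_def
  have hu : ‖u‖ = 1 := by
    rw [hu_def, norm_smul, norm_inv, norm_norm, inv_mul_cancel₀ hn]
  have hus : SpansLine u x := spansLine_smul _ (inv_ne_zero hn) hw
  have hb := h u hu hus
  have hwu : w = ‖w‖ • u := by
    rw [hu_def, smul_smul, mul_inv_cancel₀ hn, one_smul]
  calc ‖mulVecE M w‖ = ‖w‖ * ‖mulVecE M u‖ := by
        conv_lhs => rw [hwu]
        rw [mulVecE_smul, norm_smul, norm_norm]
    _ ≤ ‖w‖ * c := by
        apply mul_le_mul_of_nonneg_left hb (norm_nonneg w)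
    _ = c * ‖w‖ := mul_comm _ _

section Cocycle

variable (P : ℤ → Mat2)

lemma fwd_zero (i : ℤ) : fwd P 0 i = 1 := rfl

lemma fwd_succ (n : ℕ) (i : ℤ) : fwd P (n + 1) i = P (i + n) * fwd P n i := rfl

lemma bwd_zero (i : ℤ) : bwd P 0 i = 1 := rfl

lemma bwd_succ (n : ℕ) (i : ℤ) : bwd P (n + 1) i = bwd P n (i - 1) * (P (i - 1))⁻¹ := rfl

lemma isUnit_fwd (hP : ∀ i, IsUnit (P i)) (n : ℕ) (i : ℤ) : IsUnit (fwd P n i) := by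
  induction n with
  | zero => exact isUnit_one
  | succ n ih => exact (hP _).mul ih

lemma isUnit_bwd (hP : ∀ i, IsUnit (P i)) (n : ℕ) (i : ℤ) : IsUnit (bwd P n i) := by
  induction n generalizing i with
  | zero => exact isUnit_one
  | succ n ih => exact (ih _).mul (isUnit_inv (hP _))

lemma fwd_add (m n : ℕ) (i : ℤ) : fwd P (m + n) i = fwd P m (i + n) * fwd P n i := by
  induction m with
  | zero => simp [fwd_zero]
  | succ m ih =>
    have e : m + 1 + n = (m + n) + 1 := by omega
    rw [e, fwd_succ, ih, fwd_succ, mul_assoc]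
    congr 2
    push_cast
    ring

lemma bwd_add (n m : ℕ) (i : ℤ) : bwd P (n + m) i = bwd P n (i - m) * bwd P m i := by
  induction m generalizing i with
  | zero => simp [bwd_zero]
  | succ m ih =>
    have e : n + (m + 1) = (n + m) + 1 := by omega
    rw [e, bwd_succ, ih, bwd_succ, mul_assoc]
    have e2 : i - 1 - (m : ℤ) = i - ((m + 1 : ℕ) : ℤ) := by push_cast; ring
    rw [e2]

lemma bwd_mul_fwd (hP : ∀ i, IsUnit (P i)) (n : ℕ) (i : ℤ) :
    bwd P n (i + n) * fwd P n i = 1 := by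
  induction n with
  | zero => simp [fwd_zero, bwd_zero]
  | succ n ih =>
    rw [bwd_succ, fwd_succ]
    have e : i + ((n : ℤ) + 1) - 1 = i + n := by ring
    have e2 : i + ((n + 1 : ℕ) : ℤ) = i + ((n : ℤ) + 1) := by push_cast; ring
    rw [e2, e]
    have h1 : (P (i + n))⁻¹ * P (i + n) = 1 :=
      Matrix.nonsing_inv_mul _ ((Matrix.isUnit_iff_isUnit_det _).mp (hP _))
    rw [mul_assoc, ← mul_assoc ((P (i + (n : ℤ)))⁻¹), h1, one_mul, ih]

lemma inv_fwd (hP : ∀ i, IsUnit (P i)) (n : ℕ) (i : ℤ) :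
    (fwd P n i)⁻¹ = bwd P n (i + n) :=
  Matrix.inv_eq_left_inv (bwd_mul_fwd P hP n i)

lemma fwd_Q (n : ℕ) (i : ℤ) :
    fwd (fun k => (P (-k - 1))⁻¹) n (-i) = bwd P n i := by
  induction n generalizing i with
  | zero => rfl
  | succ n ih =>
    have e : n + 1 = 1 + n := by omega
    have h2 : fwd (fun k => (P (-k - 1))⁻¹) (n + 1) (-i) =
        (P (-(-i + (n : ℤ)) - 1))⁻¹ * bwd P n i := by
      rw [fwd_succ, ih]
    rw [h2, e, bwd_add]
    have h1 : bwd P 1 (i - (n : ℤ)) = (P (i - (n : ℤ) - 1))⁻¹ := by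
      show bwd P 0 (i - (n : ℤ) - 1) * (P (i - (n : ℤ) - 1))⁻¹ = _
      rw [bwd_zero, one_mul]
    rw [h1]
    have e2 : -(-i + (n : ℤ)) - 1 = i - (n : ℤ) - 1 := by ring
    rw [e2]

lemma opNorm_fwd_le {K : ℝ} (hK : 1 ≤ K) (hPK : ∀ i, matOpNorm (P i) ≤ K) (n : ℕ) (i : ℤ) :
    matOpNorm (fwd P n i) ≤ K ^ n := by
  induction n with
  | zero => simpa [fwd_zero] using matOpNorm_one
  | succ n ih =>
    rw [fwd_succ, pow_succ]
    calc matOpNorm (P (i + n) * fwd P n i) ≤ matOpNorm (P (i + n)) * matOpNorm (fwd P n i) :=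
          matOpNorm_mul_le _ _
      _ ≤ K * K ^ n := by
          apply mul_le_mul (hPK _) ih (matOpNorm_nonneg _) (by linarith)
      _ = K ^ n * K := mul_comm _ _

lemma norm_mulVecE_fwd_le {K : ℝ} (hK : 1 ≤ K) (hPK : ∀ i, matOpNorm (P i) ≤ K)
    (n : ℕ) (i : ℤ) (w : E2) : ‖mulVecE (fwd P n i) w‖ ≤ K ^ n * ‖w‖ := by
  calc ‖mulVecE (fwd P n i) w‖ ≤ matOpNorm (fwd P n i) * ‖w‖ := norm_mulVecE_le _ _
    _ ≤ K ^ n * ‖w‖ :=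
      mul_le_mul_of_nonneg_right (opNorm_fwd_le P hK hPK n i) (norm_nonneg w)

lemma matAct_fwd (hP : ∀ i, IsUnit (P i)) (u : ℤ → RP1)
    (hu : ∀ i, matAct (P i) (u i) = u (i + 1)) (n : ℕ) (i : ℤ) :
    matAct (fwd P n i) (u i) = u (i + n) := by
  induction n with
  | zero => simpa [fwd_zero] using matAct_one (u i)
  | succ n ih =>
    rw [fwd_succ, matAct_mul (hP _) (isUnit_fwd P hP n i), ih, hu (i + n)]
    congr 1
    push_cast
    ring

end Cocycle

section Locate

variable (st : ℤ → ℤ)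

lemma locate (hg : ∀ j, st j + 1 ≤ st (j + 1)) (h0 : st 0 = 0) :
    ∀ i : ℤ, ∃ j, st j ≤ i ∧ i < st (j + 1) := by
  have step_up : ∀ i : ℤ, (∃ j, st j ≤ i ∧ i < st (j + 1)) →
      (∃ j, st j ≤ i + 1 ∧ i + 1 < st (j + 1)) := by
    rintro i ⟨j, h1, h2⟩
    rcases lt_or_ge (i + 1) (st (j + 1)) with h | h
    · exact ⟨j, by omega, h⟩
    · exact ⟨j + 1, h, by have := hg (j + 1); omega⟩
  have step_down : ∀ i : ℤ, (∃ j, st j ≤ i ∧ i < st (j + 1)) →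
      (∃ j, st j ≤ i - 1 ∧ i - 1 < st (j + 1)) := by
    rintro i ⟨j, h1, h2⟩
    rcases le_or_gt (st j) (i - 1) with h | h
    · exact ⟨j, h, by omega⟩
    · refine ⟨j - 1, ?_, ?_⟩
      · have h3 := hg (j - 1)
        have e : j - 1 + 1 = j := by ring
        rw [e] at h3
        omega
      · have e : j - 1 + 1 = j := by ring
        rw [e]
        omega
  intro i
  induction i using Int.induction_on with
  | zero => exact ⟨0, le_of_eq h0, by have := hg 0; omega⟩
  | succ i ih => exact step_up _ ih
  | pred i ih => exact step_down _ ih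

lemma st_strictMono (hg : ∀ j, st j + 1 ≤ st (j + 1)) : StrictMono st :=
  strictMono_int_of_lt_succ fun j => by have := hg j; omega

lemma locate_uniq (hg : ∀ j, st j + 1 ≤ st (j + 1)) {i j j' : ℤ}
    (h1 : st j ≤ i) (h2 : i < st (j + 1)) (h3 : st j' ≤ i) (h4 : i < st (j' + 1)) :
    j = j' := by
  by_contra hne
  rcases lt_or_gt_of_ne hne with h | h
  · have := (st_strictMono st hg).monotone (show j + 1 ≤ j' by omega)
    omega
  · have := (st_strictMono st hg).monotone (show j' + 1 ≤ j by omega)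
    omega

lemma st_add_nat_ge (hg : ∀ j, st j + 1 ≤ st (j + 1)) (j : ℤ) (n : ℕ) :
    st j + n ≤ st (j + n) := by
  induction n with
  | zero => simp
  | succ n ih =>
    have h1 := hg (j + n)
    have e : j + ((n + 1 : ℕ) : ℤ) = (j + n) + 1 := by push_cast; ring
    rw [e]
    omega

lemma st_add_nat_le {M : ℕ} (hM : ∀ j, st (j + 1) ≤ st j + M) (j : ℤ) (n : ℕ) :
    st (j + n) ≤ st j + M * n := by
  induction n with
  | zero => simp
  | succ n ih =>
    have h1 := hM (j + n)
    have e : j + ((n + 1 : ℕ) : ℤ) = (j + n) + 1 := by push_cast; ring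
    rw [e]
    have e2 : (M : ℤ) * ((n + 1 : ℕ) : ℤ) = M * n + M := by push_cast; ring
    push_cast at e2 ⊢
    linarith

end Locate

lemma det_propOf (lam : ℝ) (t : ℝ × ℝ × ℝ) : (propOf lam t).det = 1 := by
  simp [propOf, propMat, Matrix.det_fin_two_of]
  ring

lemma isUnit_propOf (lam : ℝ) (t : ℝ × ℝ × ℝ) : IsUnit (propOf lam t) := by
  rw [Matrix.isUnit_iff_isUnit_det, det_propOf]
  exact isUnit_one

lemma blockMat_fwd (lam : ℝ) (data : ℤ → ℝ × ℝ × ℝ) (L : List (ℝ × ℝ × ℝ)) (i0 : ℤ)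
    (hdata : ∀ (k : ℕ) (hk : k < L.length), data (i0 + (k : ℤ)) = L.get ⟨k, hk⟩) :
    ((L.map (propOf lam)).reverse).prod = fwd (fun i => propOf lam (data i)) L.length i0 := by
  suffices h : ∀ k, k ≤ L.length →
      fwd (fun i => propOf lam (data i)) k i0 = (((L.take k).map (propOf lam)).reverse).prod by
    rw [h L.length le_rfl, List.take_length]
  intro k
  induction k with
  | zero => intro _; simp [fwd_zero]
  | succ k ih =>
    intro hk
    have hk' : k < L.length := hk
    rw [fwd_succ, ih (le_of_lt hk'), hdata k hk']
    have hmk : k < (List.map (propOf lam) L).length := by simpa using hk'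
    have ht : (List.map (propOf lam) L).take (k + 1)
        = (List.map (propOf lam) L).take k ++ [propOf lam L[k]] := by
      rw [List.take_succ, List.getElem?_eq_getElem hmk]
      simp
    rw [List.map_take, List.map_take, ht]
    simp [List.get_eq_getElem]

section Extend

variable (P : ℤ → Mat2) (st : ℤ → ℤ)

lemma extend (hP : ∀ i, IsUnit (P i))
    (hg : ∀ j, st j + 1 ≤ st (j + 1)) (h0 : st 0 = 0) (x' : ℤ → RP1)
    (hbinv : ∀ j, matAct (fwd P ((st (j + 1) - st j).toNat) (st j)) (x' j) = x' (j + 1)) :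
    ∃ x : ℤ → RP1, (∀ i, matAct (P i) (x i) = x (i + 1)) ∧ ∀ j, x (st j) = x' j := by
  choose J hJ1 hJ2 using locate st hg h0
  have uniq : ∀ i j, st j ≤ i → i < st (j + 1) → J i = j :=
    fun i j a b => locate_uniq st hg (hJ1 i) (hJ2 i) a b
  refine ⟨fun i => matAct (fwd P (i - st (J i)).toNat (st (J i))) (x' (J i)), ?_, ?_⟩
  · intro i
    show matAct (P i) (matAct (fwd P (i - st (J i)).toNat (st (J i))) (x' (J i))) =
      matAct (fwd P (i + 1 - st (J (i + 1))).toNat (st (J (i + 1)))) (x' (J (i + 1)))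
    have h1 : st (J i) ≤ i := hJ1 i
    have h2 : i < st (J i + 1) := hJ2 i
    set j := J i with hj
    set k : ℕ := (i - st j).toNat with hk
    have hik : st j + (k : ℤ) = i := by omega
    have hstep : matAct (P i) (matAct (fwd P k (st j)) (x' j)) =
        matAct (fwd P (k + 1) (st j)) (x' j) := by
      rw [fwd_succ, hik, matAct_mul (hP i) (isUnit_fwd P hP k (st j))]
    by_cases hcase : i + 1 < st (j + 1)
    · have hJ' : J (i + 1) = j := uniq _ _ (by omega) hcase
      have hk1 : ((i + 1) - st (J (i + 1))).toNat = k + 1 := by rw [hJ']; omega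
      rw [hk1, hJ', hstep]
    · have hi1 : i + 1 = st (j + 1) := by omega
      have hJ' : J (i + 1) = j + 1 := uniq _ _ (by omega) (by have := hg (j + 1); omega)
      have hk0 : ((i + 1) - st (J (i + 1))).toNat = 0 := by rw [hJ']; omega
      rw [hk0, hJ', fwd_zero, matAct_one, ← hbinv j]
      have hkg : (st (j + 1) - st j).toNat = k + 1 := by omega
      rw [hkg, hstep]
  · intro j
    show matAct (fwd P (st j - st (J (st j))).toNat (st (J (st j)))) (x' (J (st j))) = x' j
    have hJ' : J (st j) = j := uniq _ _ le_rfl (by have := hg j; omega)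
    rw [hJ']
    simp only [sub_self, Int.toNat_zero, fwd_zero]
    exact matAct_one _

end Extend

section Core

lemma core (P : ℤ → Mat2) (st : ℤ → ℤ) (s : ℤ → RP1) (M : ℕ) (K C η : ℝ)
    (hM1 : 1 ≤ M) (hK : 1 ≤ K) (hC : 0 < C) (hη : 1 < η)
    (hg : ∀ j, st j + 1 ≤ st (j + 1)) (hMle : ∀ j, st (j + 1) ≤ st j + (M : ℤ))
    (h0 : st 0 = 0)
    (hP : ∀ i, IsUnit (P i)) (hPK : ∀ i, matOpNorm (P i) ≤ K)
    (hsinv : ∀ i, matAct (P i) (s i) = s (i + 1))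
    (hblk : ∀ (j : ℤ) (n : ℕ) (w : E2), SpansLine w (s (st j)) →
      ‖mulVecE (fwd P ((st (j + n) - st j).toNat) (st j)) w‖ ≤ C / η ^ n * ‖w‖) :
    ∀ (i : ℤ) (n : ℕ) (w : E2), ‖w‖ = 1 → SpansLine w (s i) →
      ‖mulVecE (fwd P n i) w‖ ≤
        (C * K ^ (2 * M) * η ^ 2 + K ^ M * η) / (η ^ ((1 : ℝ) / (M : ℝ))) ^ n := by
  have hη0 : (0:ℝ) < η := lt_trans one_pos hη
  have hK0 : (0:ℝ) < K := by linarith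
  have hM1R : (1:ℝ) ≤ (M:ℝ) := by exact_mod_cast hM1
  have hMR : (0:ℝ) < (M:ℝ) := by linarith
  set t := η ^ ((1 : ℝ) / (M : ℝ)) with ht_def
  have ht1 : 1 < t := by
    rw [ht_def, Real.one_lt_rpow_iff_of_pos hη0]
    left
    exact ⟨hη, by positivity⟩
  have ht0 : (0:ℝ) < t := lt_trans one_pos ht1
  have htM : t ^ M = η := by
    rw [ht_def, ← Real.rpow_natCast (η ^ ((1:ℝ)/(M:ℝ))) M, ← Real.rpow_mul (le_of_lt hη0)]
    rw [one_div, inv_mul_cancel₀ (ne_of_gt hMR), Real.rpow_one]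
  set C' := C * K ^ (2 * M) * η ^ 2 + K ^ M * η with hC'
  have hC'0 : 0 < C' := by rw [hC']; positivity
  intro i n w hw hsw
  obtain ⟨j, hj1, hj2⟩ := locate st hg h0 i
  set a : ℕ := (st (j + 1) - i).toNat with ha
  have haM : a ≤ M := by have := hMle j; omega
  have ha1 : 1 ≤ a := by omega
  rw [le_div_iff₀ (pow_pos ht0 n)]
  by_cases hna : n < a
  · have h1 : ‖mulVecE (fwd P n i) w‖ ≤ K ^ n := by
      have h2 := norm_mulVecE_fwd_le P hK hPK n i w
      rwa [hw, mul_one] at h2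
    have h2 : t ^ n ≤ η := by
      calc t ^ n ≤ t ^ M := pow_le_pow_right₀ (le_of_lt ht1) (by omega)
        _ = η := htM
    calc ‖mulVecE (fwd P n i) w‖ * t ^ n ≤ K ^ n * η := by
          apply mul_le_mul h1 h2 (by positivity) (by positivity)
      _ ≤ K ^ M * η := by
          apply mul_le_mul_of_nonneg_right (pow_le_pow_right₀ hK (by omega)) (le_of_lt hη0)
      _ ≤ C' := by
          rw [hC']
          have : 0 ≤ C * K ^ (2 * M) * η ^ 2 := by positivity
          linarith
  · push_neg at hna
    set r : ℕ := n - a with hr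
    classical
    set Q : ℕ → Prop := fun m => st (j + 1 + (m : ℤ)) ≤ st (j + 1) + (r : ℤ) with hQ
    have hQ0 : Q 0 := by simp only [hQ, Nat.cast_zero, add_zero]; omega
    set m := Nat.findGreatest Q r with hm_def
    have hm : Q m := Nat.findGreatest_spec (Nat.zero_le r) hQ0
    have hm2 : st (j + 1 + (m : ℤ)) ≤ st (j + 1) + (r : ℤ) := hm
    have hmr : m ≤ r := Nat.findGreatest_le r
    have hge := st_add_nat_ge st hg (j + 1) m
    have hnot : ¬ Q (m + 1) := by
      rcases Nat.lt_or_ge m r with hlt | hge'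
      · exact Nat.findGreatest_is_greatest (by rw [← hm_def]; omega) (by omega)
      · have hm' : m = r := le_antisymm hmr hge'
        intro hQ'
        have h5 := st_add_nat_ge st hg (j + 1) (m + 1)
        have hQ'2 : st (j + 1 + ((m + 1 : ℕ) : ℤ)) ≤ st (j + 1) + (r : ℤ) := hQ'
        omega
    have hnot2 : ¬ st (j + 1 + ((m + 1 : ℕ) : ℤ)) ≤ st (j + 1) + (r : ℤ) := hnot
    set g : ℕ := (st (j + 1 + (m : ℤ)) - st (j + 1)).toNat with hgd
    have hgval : (g : ℤ) = st (j + 1 + (m : ℤ)) - st (j + 1) := by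
      rw [hgd]; omega
    have hgr : g ≤ r := by omega
    set b : ℕ := r - g with hb
    have e1 : j + 1 + ((m + 1 : ℕ) : ℤ) = (j + 1 + (m : ℤ)) + 1 := by push_cast; ring
    have hMle' := hMle (j + 1 + (m : ℤ))
    rw [e1] at hnot2
    have hbM : b ≤ M := by omega
    have hn_eq : n = b + (g + a) := by omega
    have hia : i + (a : ℤ) = st (j + 1) := by omega
    have hw1span : SpansLine (mulVecE (fwd P a i) w) (s (st (j + 1))) := by
      have h6 := spansLine_matAct (isUnit_fwd P hP a i) hsw
      rw [matAct_fwd P hP s hsinv a i, hia] at h6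
      exact h6
    set w1 := mulVecE (fwd P a i) w with hw1d
    have hw1norm : ‖w1‖ ≤ K ^ M := by
      have h6 := norm_mulVecE_fwd_le P hK hPK a i w
      rw [hw, mul_one] at h6
      exact le_trans h6 (pow_le_pow_right₀ hK haM)
    have hw2b : ‖mulVecE (fwd P g (st (j + 1))) w1‖ ≤ C / η ^ m * ‖w1‖ := by
      rw [hgd]
      exact hblk (j + 1) m w1 hw1span
    set w2 := mulVecE (fwd P g (st (j + 1))) w1 with hw2d
    have hsplit : fwd P n i = fwd P b (st (j + 1) + (g : ℤ)) * (fwd P g (st (j + 1)) * fwd P a i) := by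
      rw [hn_eq, fwd_add, fwd_add]
      have e2 : i + ((g + a : ℕ) : ℤ) = st (j + 1) + (g : ℤ) := by push_cast; omega
      rw [e2, hia]
    have hfinal : ‖mulVecE (fwd P n i) w‖ ≤ K ^ M * (C / η ^ m * K ^ M) := by
      calc ‖mulVecE (fwd P n i) w‖ = ‖mulVecE (fwd P b (st (j + 1) + (g : ℤ))) w2‖ := by
            rw [hsplit, mulVecE_mul, mulVecE_mul]
        _ ≤ K ^ b * ‖w2‖ := norm_mulVecE_fwd_le P hK hPK b _ w2
        _ ≤ K ^ M * ‖w2‖ :=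
            mul_le_mul_of_nonneg_right (pow_le_pow_right₀ hK hbM) (norm_nonneg _)
        _ ≤ K ^ M * (C / η ^ m * ‖w1‖) :=
            mul_le_mul_of_nonneg_left hw2b (by positivity)
        _ ≤ K ^ M * (C / η ^ m * K ^ M) := by
            apply mul_le_mul_of_nonneg_left _ (by positivity)
            exact mul_le_mul_of_nonneg_left hw1norm (by positivity)
    have hgleR : (g : ℝ) ≤ (M : ℝ) * (m : ℝ) := by
      have h8 := st_add_nat_le st hMle (j + 1) m
      have h9 : (g : ℤ) ≤ ((M * m : ℕ) : ℤ) := by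
        rw [hgval]
        push_cast at h8 ⊢
        linarith
      exact_mod_cast h9
    have hnR : (n : ℝ) ≤ (M : ℝ) * ((m : ℝ) + 2) := by
      have haR : (a : ℝ) ≤ (M : ℝ) := by exact_mod_cast haM
      have hbR : (b : ℝ) ≤ (M : ℝ) := by exact_mod_cast hbM
      have hnR0 : (n : ℝ) = (b : ℝ) + ((g : ℝ) + (a : ℝ)) := by exact_mod_cast hn_eq
      rw [hnR0]
      linarith
    have htn : t ^ n ≤ η ^ (m + 2) := by
      have h11 : t ^ n = η ^ ((n : ℝ) / (M : ℝ)) := by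
        rw [ht_def, ← Real.rpow_natCast (η ^ ((1:ℝ)/(M:ℝ))) n, ← Real.rpow_mul (le_of_lt hη0)]
        congr 1
        field_simp
      have h12 : η ^ (m + 2) = η ^ (((m : ℝ) + 2)) := by
        rw [← Real.rpow_natCast η (m + 2)]
        congr 1
        push_cast
        ring
      rw [h11, h12]
      apply (Real.rpow_le_rpow_left_iff hη).2
      rw [div_le_iff₀ hMR]
      linarith
    calc ‖mulVecE (fwd P n i) w‖ * t ^ n
        ≤ (K ^ M * (C / η ^ m * K ^ M)) * η ^ (m + 2) :=
          mul_le_mul hfinal htn (by positivity) (by positivity)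
      _ = C * K ^ (2 * M) * η ^ 2 := by
          have hηm : η ^ m ≠ 0 := by positivity
          rw [pow_add η m 2, two_mul, pow_add K M M]
          field_simp
      _ ≤ C' := by
          rw [hC']
          have : 0 ≤ K ^ M * η := by positivity
          linarith

end Core

end UHAux


theorem stmt_5 (D : ℕ) (B : Fin D → Block) (lam : ℝ) (hlam : 0 ≤ lam)
    (χ : ℤ → Fin D) (data : ℤ → ℝ × ℝ × ℝ) (st : ℤ → ℤ)
    (hconcat : IsConcat B χ data st) :
    IsUH (fun j => blockMat lam (B (χ j))) ↔ IsUH (fun i => propOf lam (data i)) := by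
  classical
  obtain ⟨h0, hlen, hdata⟩ := hconcat
  have hneFin : Nonempty (Fin D) := ⟨χ 0⟩
  set P : ℤ → Matrix (Fin 2) (Fin 2) ℝ := fun i => propOf lam (data i) with hPdef
  set T : ℤ → Matrix (Fin 2) (Fin 2) ℝ := fun j => blockMat lam (B (χ j)) with hTdef
  have hlen1 : ∀ d : Fin D, 1 ≤ (B d).1.length := fun d => List.length_pos_iff.mpr (B d).2.1
  have hunit : ∀ i, IsUnit (P i) := by
    intro i
    rw [hPdef]
    exact UHAux.isUnit_propOf lam (data i)
  have hgSt : ∀ j, st j + 1 ≤ st (j + 1) := by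
    intro j
    rw [hlen j]
    have := hlen1 (χ j)
    omega
  have hmono := UHAux.st_strictMono st hgSt
  set M : ℕ := Finset.univ.sup' Finset.univ_nonempty (fun d : Fin D => (B d).1.length)
    with hMdef
  have hMd : ∀ d : Fin D, (B d).1.length ≤ M := by
    intro d
    rw [hMdef]
    exact Finset.le_sup' (fun d : Fin D => (B d).1.length) (Finset.mem_univ d)
  have hM1 : 1 ≤ M := le_trans (hlen1 (χ 0)) (hMd (χ 0))
  have hMle : ∀ j, st (j + 1) ≤ st j + (M : ℤ) := by
    intro j
    rw [hlen j]
    have := hMd (χ j)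
    omega
  have hblockT : ∀ j : ℤ, T j = fwd P ((B (χ j)).1.length) (st j) := by
    intro j
    rw [hTdef, hPdef]
    exact UHAux.blockMat_fwd lam data ((B (χ j)).1) (st j) (fun k hk => hdata j k hk)
  have hfwdT : ∀ (n : ℕ) (j : ℤ),
      fwd T n j = fwd P ((st (j + (n : ℤ)) - st j).toNat) (st j) := by
    intro n
    induction n with
    | zero =>
      intro j
      simp [UHAux.fwd_zero]
    | succ n ih =>
      intro j
      rw [UHAux.fwd_succ, ih j, hblockT (j + (n : ℤ))]
      have hgj : st j ≤ st (j + (n : ℤ)) := hmono.monotone (by omega)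
      set g : ℕ := (st (j + (n : ℤ)) - st j).toNat with hgd
      set g' : ℕ := (st (j + ((n + 1 : ℕ) : ℤ)) - st j).toNat with hgd'
      have e : st (j + (n : ℤ)) = st j + (g : ℤ) := by omega
      have e2 : g' = (B (χ (j + (n : ℤ)))).1.length + g := by
        have h5 := hlen (j + (n : ℤ))
        have e3 : j + ((n + 1 : ℕ) : ℤ) = (j + (n : ℤ)) + 1 := by push_cast; ring
        rw [e3] at hgd'
        omega
      rw [e, e2, UHAux.fwd_add]
  have hbwdT : ∀ (n : ℕ) (j : ℤ),
      bwd T n j = bwd P ((st j - st (j - (n : ℤ))).toNat) (st j) := by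
    intro n
    induction n with
    | zero =>
      intro j
      simp [UHAux.bwd_zero]
    | succ n ih =>
      intro j
      rw [UHAux.bwd_succ, ih (j - 1), hblockT (j - 1)]
      have e4 : st (j - 1) + ((B (χ (j - 1))).1.length : ℤ) = st j := by
        have h5 := hlen (j - 1)
        have e5 : j - 1 + 1 = j := by ring
        rw [e5] at h5
        omega
      rw [UHAux.inv_fwd P hunit, e4]
      set g' : ℕ := (st (j - 1) - st (j - 1 - (n : ℤ))).toNat with hg'd
      have hmono2 : st (j - 1 - (n : ℤ)) ≤ st (j - 1) := hmono.monotone (by omega)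
      have e8 : (st j - st (j - ((n + 1 : ℕ) : ℤ))).toNat
          = g' + (B (χ (j - 1))).1.length := by
        rw [show j - ((n + 1 : ℕ) : ℤ) = j - 1 - (n : ℤ) from by push_cast; ring]
        omega
      have e6 : st j - ((B (χ (j - 1))).1.length : ℤ) = st (j - 1) := by omega
      rw [e8, UHAux.bwd_add, e6]
  set F : Finset (ℝ × ℝ × ℝ) := Finset.univ.biUnion (fun d : Fin D => (B d).1.toFinset)
    with hFdef
  have hFne : F.Nonempty := by
    obtain ⟨tr, htr⟩ := List.exists_mem_of_ne_nil _ (B (χ 0)).2.1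
    exact ⟨tr, by
      rw [hFdef]
      exact Finset.mem_biUnion.2 ⟨χ 0, Finset.mem_univ _, List.mem_toFinset.2 htr⟩⟩
  set K : ℝ := 1 ⊔ F.sup' hFne
      (fun tr => matOpNorm (propOf lam tr) ⊔ matOpNorm ((propOf lam tr))⁻¹) with hKdef
  have hK1 : (1 : ℝ) ≤ K := by rw [hKdef]; exact le_max_left _ _
  have hdatamem : ∀ i : ℤ, data i ∈ F := by
    intro i
    obtain ⟨j, hj1, hj2⟩ := UHAux.locate st hgSt h0 i
    have hk : (i - st j).toNat < (B (χ j)).1.length := by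
      have := hlen j
      omega
    have hdi : data i = (B (χ j)).1.get ⟨(i - st j).toNat, hk⟩ := by
      have h5 := hdata j (i - st j).toNat hk
      rw [show st j + (((i - st j).toNat : ℕ) : ℤ) = i from by omega] at h5
      exact h5
    rw [hdi, hFdef]
    exact Finset.mem_biUnion.2 ⟨χ j, Finset.mem_univ _,
      List.mem_toFinset.2 (List.get_mem _ ⟨_, hk⟩)⟩
  have hKboth : ∀ i, matOpNorm (P i) ≤ K ∧ matOpNorm ((P i)⁻¹) ≤ K := by
    intro i
    have h5 : (fun tr => matOpNorm (propOf lam tr) ⊔ matOpNorm ((propOf lam tr))⁻¹) (data i)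
        ≤ F.sup' hFne (fun tr => matOpNorm (propOf lam tr) ⊔ matOpNorm ((propOf lam tr))⁻¹) :=
      Finset.le_sup' (fun tr => matOpNorm (propOf lam tr) ⊔ matOpNorm ((propOf lam tr))⁻¹)
        (hdatamem i)
    have h6 : F.sup' hFne
        (fun tr => matOpNorm (propOf lam tr) ⊔ matOpNorm ((propOf lam tr))⁻¹) ≤ K := by
      rw [hKdef]
      exact le_max_right _ _
    constructor
    · rw [hPdef]
      exact le_trans (le_trans (le_max_left _ _) h5) h6
    · rw [hPdef]
      exact le_trans (le_trans (le_max_right _ _) h5) h6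
  have hKP : ∀ i, matOpNorm (P i) ≤ K := fun i => (hKboth i).1
  have hKPinv : ∀ i, matOpNorm ((P i)⁻¹) ≤ K := fun i => (hKboth i).2
  constructor
  · -- hard direction: blocks UH → resonators UH
    rintro ⟨u', s', hinv', C, hC, η, hη, hbnd⟩
    have hη0 : (0 : ℝ) < η := lt_trans one_pos hη
    have hM1R : (1 : ℝ) ≤ (M : ℝ) := by exact_mod_cast hM1
    have hT1 : ∀ j : ℤ, fwd T 1 j = fwd P ((st (j + 1) - st j).toNat) (st j) := by
      intro j
      have h7 := hfwdT 1 j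
      simpa using h7
    have hTj : ∀ j : ℤ, fwd T 1 j = T j := by
      intro j
      show T (j + ((0 : ℕ) : ℤ)) * fwd T 0 j = T j
      rw [UHAux.fwd_zero, mul_one]
      norm_num
    have hbinvu : ∀ j, matAct (fwd P ((st (j + 1) - st j).toNat) (st j)) (u' j) = u' (j + 1) := by
      intro j
      rw [← hT1 j, hTj j]
      exact (hinv' j).1
    have hbinvs : ∀ j, matAct (fwd P ((st (j + 1) - st j).toNat) (st j)) (s' j) = s' (j + 1) := by
      intro j
      rw [← hT1 j, hTj j]
      exact (hinv' j).2
    obtain ⟨u, huinv, hust⟩ := UHAux.extend P st hunit hgSt h0 u' hbinvu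
    obtain ⟨s, hsinv, hsst⟩ := UHAux.extend P st hunit hgSt h0 s' hbinvs
    have hsblk : ∀ (j : ℤ) (n : ℕ) (w : E2), SpansLine w (s (st j)) →
        ‖mulVecE (fwd P ((st (j + (n : ℤ)) - st j).toNat) (st j)) w‖ ≤ C / η ^ n * ‖w‖ := by
      intro j n
      apply UHAux.bound_scale
      intro w hw hws
      rw [hsst j] at hws
      have h6 := (hbnd j n).2 w hw hws
      rw [hfwdT n j] at h6
      exact h6
    have hublk : ∀ (j : ℤ) (n : ℕ) (w : E2), SpansLine w (u (st j)) →
        ‖mulVecE (bwd P ((st j - st (j - (n : ℤ))).toNat) (st j)) w‖ ≤ C / η ^ n * ‖w‖ := by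
      intro j n
      apply UHAux.bound_scale
      intro w hw hws
      rw [hust j] at hws
      have h6 := (hbnd j n).1 w hw hws
      rw [hbwdT n j] at h6
      exact h6
    have hscore := UHAux.core P st s M K C η hM1 hK1 hC hη hgSt hMle h0 hunit hKP hsinv hsblk
    -- reversed cocycle
    have hg_q : ∀ j : ℤ, (fun j => -st (-j)) j + 1 ≤ (fun j => -st (-j)) (j + 1) := by
      intro j
      show -st (-j) + 1 ≤ -st (-(j + 1))
      have h5 := hgSt (-(j + 1))
      rw [show -(j + 1) + 1 = -j from by ring] at h5
      omega
    have hMle_q : ∀ j : ℤ, (fun j => -st (-j)) (j + 1) ≤ (fun j => -st (-j)) j + (M : ℤ) := by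
      intro j
      show -st (-(j + 1)) ≤ -st (-j) + (M : ℤ)
      have h5 := hMle (-(j + 1))
      rw [show -(j + 1) + 1 = -j from by ring] at h5
      omega
    have h0_q : (fun j => -st (-j)) 0 = 0 := by
      show -st (-0) = 0
      rw [neg_zero, h0, neg_zero]
    have hP_q : ∀ i : ℤ, IsUnit ((fun k => (P (-k - 1))⁻¹) i) :=
      fun i => UHAux.isUnit_inv (hunit _)
    have hPK_q : ∀ i : ℤ, matOpNorm ((fun k => (P (-k - 1))⁻¹) i) ≤ K :=
      fun i => hKPinv _
    have hs_q : ∀ i : ℤ, matAct ((fun k => (P (-k - 1))⁻¹) i) ((fun i => u (-i)) i)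
        = (fun i => u (-i)) (i + 1) := by
      intro i
      show matAct ((P (-i - 1))⁻¹) (u (-i)) = u (-(i + 1))
      have h5 := huinv (-i - 1)
      rw [show -i - 1 + 1 = -i from by ring] at h5
      have h6 := UHAux.matAct_inv (hunit _) h5
      rw [show -(i + 1) = -i - 1 from by ring]
      exact h6
    have hblk_q : ∀ (j : ℤ) (n : ℕ) (w : E2),
        SpansLine w ((fun i => u (-i)) ((fun j => -st (-j)) j)) →
        ‖mulVecE (fwd (fun k => (P (-k - 1))⁻¹)
            (((fun j => -st (-j)) (j + (n : ℤ)) - (fun j => -st (-j)) j).toNat)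
            ((fun j => -st (-j)) j)) w‖ ≤ C / η ^ n * ‖w‖ := by
      intro j n w hws
      have hws' : SpansLine w (u (st (-j))) := by
        have h5 : (fun i => u (-i)) ((fun j => -st (-j)) j) = u (st (-j)) := by
          show u (-(-st (-j))) = u (st (-j))
          rw [neg_neg]
        rwa [h5] at hws
      show ‖mulVecE (fwd (fun k => (P (-k - 1))⁻¹)
          ((-st (-(j + (n : ℤ))) - -st (-j)).toNat) (-st (-j))) w‖ ≤ C / η ^ n * ‖w‖
      have e9 : -st (-(j + (n : ℤ))) - -st (-j) = st (-j) - st (-j - (n : ℤ)) := by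
        rw [show -(j + (n : ℤ)) = -j - (n : ℤ) from by ring]
        ring
      rw [e9, UHAux.fwd_Q P]
      exact hublk (-j) n w hws'
    have hqcore := UHAux.core (fun k => (P (-k - 1))⁻¹) (fun j => -st (-j)) (fun i => u (-i))
      M K C η hM1 hK1 hC hη hg_q hMle_q h0_q hP_q hPK_q hs_q hblk_q
    refine ⟨u, s, fun i => ⟨huinv i, hsinv i⟩,
      C * K ^ (2 * M) * η ^ 2 + K ^ M * η, by positivity,
      η ^ ((1 : ℝ) / (M : ℝ)), ?_, ?_⟩
    · show (1 : ℝ) < η ^ ((1 : ℝ) / (M : ℝ))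
      rw [Real.one_lt_rpow_iff_of_pos hη0]
      left
      constructor
      · exact hη
      · positivity
    · intro i n
      constructor
      · intro w hw hws
        have h5 := hqcore (-i) n w hw (by
          show SpansLine w (u (-(-i)))
          rw [neg_neg]
          exact hws)
        rw [UHAux.fwd_Q P] at h5
        exact h5
      · intro w hw hws
        exact hscore i n w hw hws
  · -- easy direction
    rintro ⟨u, s, hinv, C, hC, η, hη, hbnd⟩
    have hη0 : (0 : ℝ) < η := lt_trans one_pos hη
    refine ⟨fun j => u (st j), fun j => s (st j), ?_, C, hC, η, hη, ?_⟩
    · intro j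
      constructor
      · show matAct (T j) (u (st j)) = u (st (j + 1))
        rw [hblockT j, UHAux.matAct_fwd P hunit u (fun i => (hinv i).1)]
        congr 1
        rw [hlen j]
      · show matAct (T j) (s (st j)) = s (st (j + 1))
        rw [hblockT j, UHAux.matAct_fwd P hunit s (fun i => (hinv i).2)]
        congr 1
        rw [hlen j]
    · intro j n
      constructor
      · intro w hw hws
        rw [hbwdT n j]
        have hws' : SpansLine w (u (st j)) := hws
        have hG : n ≤ (st j - st (j - (n : ℤ))).toNat := by
          have h5 := UHAux.st_add_nat_ge st hgSt (j - (n : ℤ)) n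
          rw [show j - (n : ℤ) + (n : ℤ) = j from by ring] at h5
          omega
        have h6 := (hbnd (st j) ((st j - st (j - (n : ℤ))).toNat)).1 w hw hws'
        refine le_trans h6 ?_
        exact div_le_div_of_nonneg_left (le_of_lt hC) (pow_pos hη0 n)
          (pow_le_pow_right₀ (le_of_lt hη) hG)
      · intro w hw hws
        rw [hfwdT n j]
        have hws' : SpansLine w (s (st j)) := hws
        have hG : n ≤ (st (j + (n : ℤ)) - st j).toNat := by
          have h5 := UHAux.st_add_nat_ge st hgSt j n
          omega
        have h6 := (hbnd (st j) ((st (j + (n : ℤ)) - st j).toNat)).2 w hw hws'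
        refine le_trans h6 ?_
        exact div_le_div_of_nonneg_left (le_of_lt hC) (pow_pos hη0 n)
          (pow_le_pow_right₀ (le_of_lt hη) hG)
end
end
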